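/- Let X be a graph. Then the following are equivalent: (1) X has no bridges; (2) for every path γ in X, if the 1-chain c_γ is orthogonal to every 1-cycle in Z₁(X,ℝ), then c_γ = 0. -/

import Mathlib

/-- A graph in the sense of Sunada's topological crystallography: a set of vertices,
a set of edges, source and target maps, and a fixed-point free involution sending
each edge to its inverse. -/
structure SunadaGraph where
  V : Type
  E : Type
  s : E → V
  t : E → V
  inv : E → E
  s_inv : ∀ e, s (inv e) = t e
  t_inv : ∀ e, t (inv e) = s e
  inv_inv : ∀ e, inv (inv e) = e
  inv_ne : ∀ e, inv e ≠ e

namespace SunadaGraph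

variable (X : SunadaGraph)

/-- `X.IsPath x y γ` : the word of edges `γ` is a path from `x` to `y` in `X`. -/
inductive IsPath : X.V → X.V → List X.E → Prop
  | nil (x : X.V) : IsPath x x []
  | cons (e : X.E) {y : X.V} {γ : List X.E} (h : IsPath (X.t e) y γ) :
      IsPath (X.s e) y (e :: γ)

/-- A graph is connected if any two vertices are joined by a path. -/
def Connected : Prop := ∀ x y : X.V, ∃ γ : List X.E, X.IsPath x y γ

/-- An edge is a bridge if there is no path from its target to its source
avoiding both the edge and its inverse. -/
def IsBridge (e : X.E) : Prop :=
  ¬ ∃ γ : List X.E, X.IsPath (X.t e) (X.s e) γ ∧ e ∉ γ ∧ X.inv e ∉ γ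

/-- The space `C₁(X,ℝ)` of real 1-chains: formal linear combinations of edges
with `e⁻¹ = -e`, realized as finitely supported functions `c : E → ℝ` with
`c(e⁻¹) = - c(e)`. -/
noncomputable def C1 : Submodule ℝ (X.E →₀ ℝ) where
  carrier := {c | ∀ e, c (X.inv e) = - c e}
  add_mem' := by
    intro a b ha hb e
    simp only [Finsupp.add_apply, ha e, hb e]
    ring
  zero_mem' := by intro e; simp
  smul_mem' := by
    intro r c hc e
    simp only [Finsupp.smul_apply, hc e, smul_eq_mul]
    ring

/-- The 1-chain associated to a single edge. -/
noncomputable def edgeChain (e : X.E) : ↥X.C1 :=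
  ⟨Finsupp.single e 1 - Finsupp.single (X.inv e) 1, by
    intro f
    classical
    have h1 : (e = X.inv f) ↔ (X.inv e = f) := by
      constructor
      · rintro rfl; exact X.inv_inv f
      · rintro rfl; exact (X.inv_inv e).symm
    have h2 : (X.inv e = X.inv f) ↔ (e = f) := by
      constructor
      · intro h
        have := congrArg X.inv h
        rwa [X.inv_inv, X.inv_inv] at this
      · rintro rfl; rfl
    simp only [Finsupp.sub_apply, Finsupp.single_apply, h1, h2]
    ring⟩

/-- The 1-chain `c_γ` of a path `γ`. -/
noncomputable def pathChain (γ : List X.E) : ↥X.C1 := (γ.map X.edgeChain).sum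

/-- The inner product on `C₁(X,ℝ)` for which the edges form an orthonormal basis
(with `e⁻¹` counting as the negative of `e`). -/
noncomputable def chainInner (c d : ↥X.C1) : ℝ :=
  (1/2) * ((c : X.E →₀ ℝ).sum fun e x => x * (d : X.E →₀ ℝ) e)

/-- The boundary of a 1-chain. -/
noncomputable def boundary (c : ↥X.C1) : X.V →₀ ℝ :=
  (c : X.E →₀ ℝ).sum fun e x => x • (Finsupp.single (X.t e) (1:ℝ) - Finsupp.single (X.s e) 1)

/-- A 1-cycle is a 1-chain with vanishing boundary. -/
def IsCycle (c : ↥X.C1) : Prop := X.boundary c = 0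

/-- An integral 1-chain: all coefficients are integers. -/
def IsIntegral (c : ↥X.C1) : Prop := ∀ e, ∃ n : ℤ, (c : X.E →₀ ℝ) e = (n : ℝ)

/-- The support of a 1-chain: the set of edges with positive coefficient. -/
def chainSupp (c : ↥X.C1) : Set X.E := {e | 0 < (c : X.E →₀ ℝ) e}

/-- `p` is the orthogonal projection of `C₁(X,ℝ)` onto the space `Z₁(X,ℝ)` of 1-cycles:
it takes values in `Z₁(X,ℝ)` and `c - p c` is orthogonal to every 1-cycle. -/
def IsOrthoProj (p : ↥X.C1 → ↥X.C1) : Prop :=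
  (∀ c, X.IsCycle (p c)) ∧ (∀ c z, X.IsCycle z → X.chainInner (c - p c) z = 0)

/-- Two paths from `x` to `y` are homologous if one can be obtained from the other
by repeatedly inserting or deleting subwords `e e⁻¹`, and/or replacing a subword
`στ` by `τσ` where `σ` and `τ` are loops based at the same vertex. -/
inductive Homologous : X.V → X.V → List X.E → List X.E → Prop
  | refl {x y : X.V} (γ : List X.E) (h : X.IsPath x y γ) : Homologous x y γ γ
  | cancel {x y : X.V} (γ δ : List X.E) (e : X.E)
      (h : X.IsPath x y (γ ++ e :: X.inv e :: δ)) (h' : X.IsPath x y (γ ++ δ)) :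
      Homologous x y (γ ++ e :: X.inv e :: δ) (γ ++ δ)
  | swap {x y : X.V} (γ σ τ δ : List X.E) (v : X.V)
      (hσ : X.IsPath v v σ) (hτ : X.IsPath v v τ)
      (h : X.IsPath x y (γ ++ (σ ++ (τ ++ δ))))
      (h' : X.IsPath x y (γ ++ (τ ++ (σ ++ δ)))) :
      Homologous x y (γ ++ (σ ++ (τ ++ δ))) (γ ++ (τ ++ (σ ++ δ)))
  | symm {x y : X.V} {a b : List X.E} (h : Homologous x y a b) : Homologous x y b a
  | trans {x y : X.V} {a b c : List X.E} (h1 : Homologous x y a b)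
      (h2 : Homologous x y b c) : Homologous x y a c

/-- A simple path: no vertex is visited twice. -/
def IsSimplePath (x y : X.V) (γ : List X.E) : Prop :=
  X.IsPath x y γ ∧ (x :: γ.map X.t).Nodup

/-- A simple loop based at `x`: a loop in which every vertex other than `x` occurs
at most once and `x` occurs only as the initial and final vertex. -/
def IsSimpleLoop (x : X.V) (γ : List X.E) : Prop :=
  X.IsPath x x γ ∧ (x :: (γ.map X.t).dropLast).Nodup

/-- A reduced word: no subword of the form `e e⁻¹`. -/
def Reduced (γ : List X.E) : Prop := γ.Chain' (fun a b => b ≠ X.inv a)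

/-- A spanning tree: a set of edges, closed under inversion, such that the spanning
subgraph it determines is connected and has no nonempty reduced loops. -/
def IsSpanningTree (S : Set X.E) : Prop :=
  (∀ e ∈ S, X.inv e ∈ S) ∧
  (∀ x y : X.V, ∃ γ : List X.E, X.IsPath x y γ ∧ ∀ e ∈ γ, e ∈ S) ∧
  (∀ (x : X.V) (γ : List X.E), X.IsPath x x γ → (∀ e ∈ γ, e ∈ S) → X.Reduced γ → γ = [])

/-- The quotient of a set of 1-chains by the translation action of the
integral 1-cycles. -/
def transQuot (S : Set ↥X.C1) : Type :=
  Quot (fun a b : S => ∃ z : ↥X.C1, X.IsCycle z ∧ X.IsIntegral z ∧ (b : ↥X.C1) = (a : ↥X.C1) + z)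

end SunadaGraph


section Aux

open Finsupp

namespace SunadaGraph

variable (X : SunadaGraph)

theorem isPath_append {x y z : X.V} {γ δ : List X.E} (h1 : X.IsPath x y γ)
    (h2 : X.IsPath y z δ) : X.IsPath x z (γ ++ δ) := by
  induction h1 with
  | nil x => simpa using h2
  | cons e h ih => exact .cons e (ih h2)

theorem isPath_single (e : X.E) : X.IsPath (X.s e) (X.t e) [e] :=
  .cons e (.nil _)

theorem isPath_inv_single (e : X.E) : X.IsPath (X.t e) (X.s e) [X.inv e] := by
  have := X.isPath_single (X.inv e)
  rwa [X.s_inv, X.t_inv] at this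

theorem isPath_reverse {x y : X.V} {γ : List X.E} (h : X.IsPath x y γ) :
    X.IsPath y x ((γ.map X.inv).reverse) := by
  induction h with
  | nil x => exact .nil x
  | cons e h ih =>
      simp only [List.map_cons, List.reverse_cons]
      exact X.isPath_append ih (X.isPath_inv_single e)

@[simp] theorem pathChain_nil : X.pathChain [] = 0 := rfl

@[simp] theorem pathChain_cons (e : X.E) (γ : List X.E) :
    X.pathChain (e :: γ) = X.edgeChain e + X.pathChain γ := by
  simp [pathChain]

@[simp] theorem pathChain_append (γ δ : List X.E) :
    X.pathChain (γ ++ δ) = X.pathChain γ + X.pathChain δ := by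
  simp [pathChain]

theorem edgeChain_coe (e : X.E) :
    ((X.edgeChain e : ↥X.C1) : X.E →₀ ℝ)
      = Finsupp.single e 1 - Finsupp.single (X.inv e) 1 := rfl

theorem edgeChain_inv (e : X.E) : X.edgeChain (X.inv e) = - X.edgeChain e := by
  apply Subtype.ext
  rw [show ((- X.edgeChain e : ↥X.C1) : X.E →₀ ℝ)
      = -((X.edgeChain e : ↥X.C1) : X.E →₀ ℝ) from rfl]
  rw [edgeChain_coe, edgeChain_coe, X.inv_inv]
  abel

theorem pathChain_reverse (γ : List X.E) :
    X.pathChain ((γ.map X.inv).reverse) = - X.pathChain γ := by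
  induction γ with
  | nil =>
      simp only [List.map_nil, List.reverse_nil, pathChain_nil]
      exact (neg_zero (G := ↥X.C1)).symm
  | cons e γ ih =>
      simp only [List.map_cons, List.reverse_cons, pathChain_append, pathChain_cons,
        pathChain_nil, ih, edgeChain_inv]
      abel

theorem edgeChain_apply_self (e : X.E) :
    ((X.edgeChain e : ↥X.C1) : X.E →₀ ℝ) e = 1 := by
  classical
  rw [edgeChain_coe]
  simp [Finsupp.single_apply, X.inv_ne e]

theorem edgeChain_apply_inv_self (e : X.E) :
    ((X.edgeChain e : ↥X.C1) : X.E →₀ ℝ) (X.inv e) = -1 := by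
  classical
  rw [edgeChain_coe]
  simp [Finsupp.single_apply, (X.inv_ne e).symm]

theorem edgeChain_apply_ne (e f : X.E) (h1 : e ≠ f) (h2 : X.inv e ≠ f) :
    ((X.edgeChain e : ↥X.C1) : X.E →₀ ℝ) f = 0 := by
  classical
  rw [edgeChain_coe]
  simp [Finsupp.single_apply, h1, h2]

/- raw pairing lemmas -/
theorem rawInner_single_right (c : X.E →₀ ℝ) (f : X.E) (b : ℝ) :
    (c.sum fun e x => x * (Finsupp.single f b) e) = c f * b := by
  classical
  rw [Finsupp.sum, Finset.sum_eq_single f]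
  · simp [Finsupp.single_apply]
  · intro e _ hne
    simp [Finsupp.single_apply, (Ne.symm hne : ¬ f = e)]
  · intro hf
    simp [Finsupp.notMem_support_iff.mp hf]

theorem chainInner_add_right (c a b : ↥X.C1) :
    X.chainInner c (a + b) = X.chainInner c a + X.chainInner c b := by
  unfold chainInner
  rw [show ((a + b : ↥X.C1) : X.E →₀ ℝ) = (a : X.E →₀ ℝ) + (b : X.E →₀ ℝ) from rfl]
  simp only [Finsupp.add_apply, mul_add, Finsupp.sum_add]

theorem chainInner_neg_right (c a : ↥X.C1) :
    X.chainInner c (-a) = - X.chainInner c a := by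
  unfold chainInner
  rw [show ((-a : ↥X.C1) : X.E →₀ ℝ) = -(a : X.E →₀ ℝ) from rfl]
  simp only [Finsupp.neg_apply, mul_neg, Finsupp.sum_neg]

theorem chainInner_zero_right (c : ↥X.C1) : X.chainInner c 0 = 0 := by
  unfold chainInner
  rw [show ((0 : ↥X.C1) : X.E →₀ ℝ) = 0 from rfl]
  simp

theorem chainInner_edge_right (c : ↥X.C1) (f : X.E) :
    X.chainInner c (X.edgeChain f) = (c : X.E →₀ ℝ) f := by
  unfold chainInner
  rw [edgeChain_coe]
  simp only [Finsupp.sub_apply, mul_sub, Finsupp.sum_sub]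
  rw [rawInner_single_right, rawInner_single_right, c.2 f]
  ring

theorem chainInner_edge_left (c : ↥X.C1) (f : X.E) :
    X.chainInner (X.edgeChain f) c = (c : X.E →₀ ℝ) f := by
  unfold chainInner
  rw [edgeChain_coe]
  rw [Finsupp.sum_sub_index (by intro a b₁ b₂; ring), Finsupp.sum_single_index,
    Finsupp.sum_single_index]
  · rw [c.2 f]; ring
  · ring
  · ring

theorem chainInner_pathChain_right (c : ↥X.C1) (γ : List X.E) :
    X.chainInner c (X.pathChain γ) = (γ.map fun f => (c : X.E →₀ ℝ) f).sum := by
  induction γ with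
  | nil => simpa using X.chainInner_zero_right c
  | cons e γ ih =>
      rw [pathChain_cons, chainInner_add_right, chainInner_edge_right, ih]
      simp

theorem chainInner_self_pos (c : ↥X.C1) (hc : c ≠ 0) : 0 < X.chainInner c c := by
  unfold chainInner
  have hne : (c : X.E →₀ ℝ) ≠ 0 := fun h => hc (Subtype.ext h)
  have hsupp : (c : X.E →₀ ℝ).support.Nonempty := by
    rwa [Finsupp.support_nonempty_iff]
  apply mul_pos (by norm_num)
  rw [Finsupp.sum]
  apply Finset.sum_pos'
  · intro e _; exact mul_self_nonneg _
  · obtain ⟨e, he⟩ := hsupp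
    exact ⟨e, he, mul_self_pos.mpr (Finsupp.mem_support_iff.mp he)⟩

/- integrality -/
theorem edgeChain_isInt (e f : X.E) :
    ∃ n : ℤ, ((X.edgeChain e : ↥X.C1) : X.E →₀ ℝ) f = (n : ℝ) := by
  by_cases h1 : e = f
  · subst h1
    exact ⟨1, by rw [edgeChain_apply_self]; norm_num⟩
  · by_cases h2 : X.inv e = f
    · subst h2
      exact ⟨-1, by rw [edgeChain_apply_inv_self]; norm_num⟩
    · exact ⟨0, by rw [X.edgeChain_apply_ne e f h1 h2]; norm_num⟩

theorem coe_add_apply (a b : ↥X.C1) (f : X.E) :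
    ((a + b : ↥X.C1) : X.E →₀ ℝ) f = (a : X.E →₀ ℝ) f + (b : X.E →₀ ℝ) f := rfl

theorem pathChain_isInt (γ : List X.E) (f : X.E) :
    ∃ n : ℤ, ((X.pathChain γ : ↥X.C1) : X.E →₀ ℝ) f = (n : ℝ) := by
  induction γ with
  | nil => exact ⟨0, by simp⟩
  | cons e γ ih =>
      obtain ⟨n, hn⟩ := ih
      obtain ⟨m, hm⟩ := X.edgeChain_isInt e f
      refine ⟨m + n, ?_⟩
      rw [pathChain_cons, coe_add_apply, hn, hm]
      push_cast; ring

/- support of a path chain -/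
theorem pathChain_apply_eq_zero {γ : List X.E} {f : X.E}
    (h1 : f ∉ γ) (h2 : X.inv f ∉ γ) :
    ((X.pathChain γ : ↥X.C1) : X.E →₀ ℝ) f = 0 := by
  induction γ with
  | nil => simp
  | cons e γ ih =>
      have hef : e ≠ f := by rintro rfl; exact h1 (List.mem_cons_self)
      have hef2 : X.inv e ≠ f := by
        rintro h
        apply h2
        rw [← h, X.inv_inv]
        exact List.mem_cons_self
      rw [pathChain_cons, coe_add_apply, X.edgeChain_apply_ne e f hef hef2,
        ih (fun h => h1 (List.mem_cons_of_mem _ h)) (fun h => h2 (List.mem_cons_of_mem _ h))]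
      ring

theorem mem_of_pathChain_apply_ne_zero {γ : List X.E} {f : X.E}
    (h : ((X.pathChain γ : ↥X.C1) : X.E →₀ ℝ) f ≠ 0) : f ∈ γ ∨ X.inv f ∈ γ := by
  by_contra hcon
  push_neg at hcon
  exact h (X.pathChain_apply_eq_zero hcon.1 hcon.2)

/- reachability of sources of edges of a path -/
theorem reach_source_of_mem {x y : X.V} {γ : List X.E} (h : X.IsPath x y γ)
    {e : X.E} (he : e ∈ γ) : ∃ π, X.IsPath x (X.s e) π := by
  induction h with
  | nil x => simp at he
  | cons f h ih =>
      rcases List.mem_cons.mp he with rfl | he'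
      · exact ⟨[], .nil _⟩
      · obtain ⟨π, hπ⟩ := ih he'
        exact ⟨f :: π, .cons f hπ⟩

/- boundary lemmas -/
theorem boundary_add (a b : ↥X.C1) : X.boundary (a + b) = X.boundary a + X.boundary b := by
  unfold boundary
  rw [show ((a + b : ↥X.C1) : X.E →₀ ℝ) = (a : X.E →₀ ℝ) + (b : X.E →₀ ℝ) from rfl]
  exact Finsupp.sum_add_index' (fun e => zero_smul ℝ _) (fun e b₁ b₂ => add_smul b₁ b₂ _)

theorem boundary_edgeChain (e : X.E) :
    X.boundary (X.edgeChain e)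
      = (2:ℝ) • (Finsupp.single (X.t e) 1 - Finsupp.single (X.s e) 1) := by
  unfold boundary
  rw [edgeChain_coe]
  rw [Finsupp.sum_sub_index (fun a b₁ b₂ => sub_smul b₁ b₂ _), Finsupp.sum_single_index,
    Finsupp.sum_single_index]
  · rw [X.s_inv, X.t_inv, one_smul, one_smul, two_smul]
    abel
  · exact zero_smul ℝ _
  · exact zero_smul ℝ _

theorem boundary_zero : X.boundary 0 = 0 := by
  unfold boundary
  rw [show ((0 : ↥X.C1) : X.E →₀ ℝ) = 0 from rfl]
  exact Finsupp.sum_zero_index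

theorem boundary_pathChain {x y : X.V} {γ : List X.E} (h : X.IsPath x y γ) :
    X.boundary (X.pathChain γ)
      = (2:ℝ) • (Finsupp.single y 1 - Finsupp.single x 1) := by
  induction h with
  | nil x => rw [pathChain_nil, boundary_zero]; simp
  | cons e h ih =>
      rw [pathChain_cons, boundary_add, boundary_edgeChain, ih, ← smul_add]
      congr 1
      abel

theorem isCycle_loop {x : X.V} {γ : List X.E} (h : X.IsPath x x γ) :
    X.IsCycle (X.pathChain γ) := by
  unfold IsCycle
  rw [X.boundary_pathChain h]
  simp

end SunadaGraph

namespace SunadaGraph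

variable (X : SunadaGraph)

theorem coe_zeroC1 : ((0 : ↥X.C1) : X.E →₀ ℝ) = 0 := rfl

theorem coe_addC1 (a b : ↥X.C1) :
    ((a + b : ↥X.C1) : X.E →₀ ℝ) = (a : X.E →₀ ℝ) + (b : X.E →₀ ℝ) := rfl

/-- pairing a cycle against a potential gives zero -/
theorem cycle_pairing (ι : X.V → ℝ) (z : ↥X.C1) (hz : X.IsCycle z) :
    ((z : X.E →₀ ℝ).sum fun f xx => xx * (ι (X.t f) - ι (X.s f))) = 0 := by
  classical
  let P : (X.V →₀ ℝ) →ₗ[ℝ] ℝ := Finsupp.lsum ℝ fun v => LinearMap.toSpanSingleton ℝ ℝ (ι v)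
  let Bnd : (X.E →₀ ℝ) →ₗ[ℝ] (X.V →₀ ℝ) := Finsupp.lsum ℝ fun f =>
    LinearMap.toSpanSingleton ℝ (X.V →₀ ℝ) (Finsupp.single (X.t f) 1 - Finsupp.single (X.s f) 1)
  let G : (X.E →₀ ℝ) →ₗ[ℝ] ℝ := Finsupp.lsum ℝ fun f =>
    LinearMap.toSpanSingleton ℝ ℝ (ι (X.t f) - ι (X.s f))
  have h1 : Bnd (z : X.E →₀ ℝ) = X.boundary z := by
    rw [Finsupp.lsum_apply]
    apply Finsupp.sum_congr
    intro f _
    rw [LinearMap.toSpanSingleton_apply]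
  have hcomp : P.comp Bnd = G := by
    apply Finsupp.lhom_ext
    intro f b
    simp only [LinearMap.comp_apply, P, Bnd, G, Finsupp.lsum_single,
      LinearMap.toSpanSingleton_apply, smul_sub, Finsupp.smul_single, smul_eq_mul, mul_one,
      map_sub]
    ring
  have hG : G (z : X.E →₀ ℝ)
      = ((z : X.E →₀ ℝ).sum fun f xx => xx * (ι (X.t f) - ι (X.s f))) := by
    rw [Finsupp.lsum_apply]
    apply Finsupp.sum_congr
    intro f _
    rw [LinearMap.toSpanSingleton_apply, smul_eq_mul]
  calc ((z : X.E →₀ ℝ).sum fun f xx => xx * (ι (X.t f) - ι (X.s f)))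
      = G (z : X.E →₀ ℝ) := hG.symm
    _ = (P.comp Bnd) (z : X.E →₀ ℝ) := by rw [hcomp]
    _ = P (X.boundary z) := by rw [LinearMap.comp_apply, h1]
    _ = 0 := by rw [show X.boundary z = 0 from hz]; exact map_zero P

/-- pairing a path chain against a potential telescopes -/
theorem pairing_pathChain (ι : X.V → ℝ) {x y : X.V} {γ : List X.E} (h : X.IsPath x y γ) :
    (((X.pathChain γ : ↥X.C1) : X.E →₀ ℝ).sum fun f xx => xx * (ι (X.t f) - ι (X.s f)))
      = 2 * (ι y - ι x) := by
  induction h with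
  | nil w =>
      rw [pathChain_nil, coe_zeroC1, Finsupp.sum_zero_index]
      ring
  | cons e h ih =>
      rw [pathChain_cons, coe_addC1,
        Finsupp.sum_add_index' (h := fun f xx => xx * (ι (X.t f) - ι (X.s f)))
          (fun f => zero_mul _) (fun f b₁ b₂ => add_mul b₁ b₂ _), ih]
      rw [edgeChain_coe, Finsupp.sum_sub_index (fun a b₁ b₂ => by ring),
        Finsupp.sum_single_index, Finsupp.sum_single_index]
      · rw [X.s_inv, X.t_inv]; ring
      · exact zero_mul _
      · exact zero_mul _

/-- the coefficient of a cycle at a bridge vanishes -/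
theorem bridge_cycle_apply_zero (e : X.E) (hbr : X.IsBridge e) (z : ↥X.C1)
    (hz : X.IsCycle z) : (z : X.E →₀ ℝ) e = 0 := by
  classical
  by_contra hesupp
  let B : X.V → Prop := fun v => ∃ δ, X.IsPath (X.t e) v δ ∧ e ∉ δ ∧ X.inv e ∉ δ
  let ι : X.V → ℝ := fun v => if B v then 1 else 0
  have hι : ∀ v, ι v = if B v then 1 else 0 := fun _ => rfl
  have hBt : B (X.t e) := ⟨[], .nil _, by simp, by simp⟩
  have hBs : ¬ B (X.s e) := hbr
  have hstep : ∀ f, f ≠ e → f ≠ X.inv e → (B (X.s f) ↔ B (X.t f)) := by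
    intro f h1 h2
    constructor
    · rintro ⟨δ, hδ, he1, he2⟩
      refine ⟨δ ++ [f], X.isPath_append hδ (X.isPath_single f), ?_, ?_⟩
      · intro hm
        rcases List.mem_append.mp hm with hm | hm
        · exact he1 hm
        · rw [List.mem_singleton] at hm; exact h1 hm.symm
      · intro hm
        rcases List.mem_append.mp hm with hm | hm
        · exact he2 hm
        · rw [List.mem_singleton] at hm; exact h2 hm.symm
    · rintro ⟨δ, hδ, he1, he2⟩
      refine ⟨δ ++ [X.inv f], X.isPath_append hδ (X.isPath_inv_single f), ?_, ?_⟩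
      · intro hm
        rcases List.mem_append.mp hm with hm | hm
        · exact he1 hm
        · rw [List.mem_singleton] at hm
          exact h2 (by rw [hm, X.inv_inv])
      · intro hm
        rcases List.mem_append.mp hm with hm | hm
        · exact he2 hm
        · rw [List.mem_singleton] at hm
          have := congrArg X.inv hm
          rw [X.inv_inv, X.inv_inv] at this
          exact h1 this.symm
  have hzero : ∀ f, f ≠ e → f ≠ X.inv e → ι (X.t f) - ι (X.s f) = 0 := by
    intro f h1 h2
    have hiff := hstep f h1 h2
    rw [hι, hι]
    by_cases hs : B (X.s f)
    · rw [if_pos (hiff.mp hs), if_pos hs]; ring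
    · rw [if_neg (fun ht => hs (hiff.mpr ht)), if_neg hs]; ring
  have hsum := X.cycle_pairing ι z hz
  rw [Finsupp.sum] at hsum
  have hesupp' : e ∈ (z : X.E →₀ ℝ).support := Finsupp.mem_support_iff.mpr hesupp
  have hinv_supp : X.inv e ∈ (z : X.E →₀ ℝ).support := by
    rw [Finsupp.mem_support_iff, z.2 e]
    simpa using hesupp
  have hpair_sub : ({e, X.inv e} : Finset X.E) ⊆ (z : X.E →₀ ℝ).support := by
    intro a ha
    rcases Finset.mem_insert.mp ha with rfl | ha
    · exact hesupp'
    · rw [Finset.mem_singleton] at ha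
      exact ha ▸ hinv_supp
  have heq : (∑ f ∈ (z : X.E →₀ ℝ).support, (z : X.E →₀ ℝ) f * (ι (X.t f) - ι (X.s f)))
      = ∑ f ∈ ({e, X.inv e} : Finset X.E), (z : X.E →₀ ℝ) f * (ι (X.t f) - ι (X.s f)) := by
    refine (Finset.sum_subset hpair_sub (fun f _ hfn => ?_)).symm
    have h1 : f ≠ e := fun h => hfn (by rw [h]; exact Finset.mem_insert_self _ _)
    have h2 : f ≠ X.inv e := fun h => hfn (by rw [h]; simp)
    rw [hzero f h1 h2, mul_zero]
  rw [heq, Finset.sum_pair (Ne.symm (X.inv_ne e))] at hsum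
  rw [z.2 e, X.s_inv, X.t_inv, hι, hι, if_pos hBt, if_neg hBs] at hsum
  have : (z : X.E →₀ ℝ) e = 0 := by linarith [hsum]
  exact hesupp this

end SunadaGraph

end Aux


/-- Lemma: bridges and orthogonality.  A graph `X` has no bridges
if and only if every 1-chain `c_γ` of a path `γ` that is orthogonal to every 1-cycle
vanishes. -/
theorem no_bridges_iff_orthogonal_path_chain_vanishes (X : SunadaGraph) :
    (∀ e : X.E, ¬ X.IsBridge e) ↔
      (∀ (x y : X.V) (γ : List X.E), X.IsPath x y γ →
        (∀ z : ↥X.C1, X.IsCycle z → X.chainInner (X.pathChain γ) z = 0) →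
        X.pathChain γ = 0) := by
  classical
  constructor
  · -- no bridges → orthogonal path chains vanish
    intro hnb x y γ hγ horth
    by_contra hc
    -- well-definedness of the potential
    have hW : ∀ (v : X.V) (π π' : List X.E), X.IsPath x v π → X.IsPath x v π' →
        X.chainInner (X.pathChain γ) (X.pathChain π)
          = X.chainInner (X.pathChain γ) (X.pathChain π') := by
      intro v π π' hπ hπ'
      have hz : X.IsCycle (X.pathChain (π ++ (π'.map X.inv).reverse)) :=
        X.isCycle_loop (X.isPath_append hπ (X.isPath_reverse hπ'))
      have h0 := horth _ hz
      rw [SunadaGraph.pathChain_append, SunadaGraph.chainInner_add_right, SunadaGraph.pathChain_reverse,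
        SunadaGraph.chainInner_neg_right] at h0
      linarith
    let A : X.V → Prop := fun v =>
      ∃ π, X.IsPath x v π ∧ 1 ≤ X.chainInner (X.pathChain γ) (X.pathChain π)
    let ι : X.V → ℝ := fun v => if A v then 1 else 0
    have hι : ∀ v, ι v = if A v then 1 else 0 := fun _ => rfl
    have hint : ∀ π : List X.E, ∃ n : ℤ,
        X.chainInner (X.pathChain γ) (X.pathChain π) = (n : ℝ) := by
      intro π
      rw [SunadaGraph.chainInner_pathChain_right]
      induction π with
      | nil => exact ⟨0, by simp⟩
      | cons f π ih =>
          obtain ⟨n, hn⟩ := ih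
          obtain ⟨m, hm⟩ := X.pathChain_isInt γ f
          exact ⟨m + n, by rw [List.map_cons, List.sum_cons, hn, hm]; push_cast; ring⟩
    have hge : ∀ (v : X.V) (π : List X.E), X.IsPath x v π → A v →
        1 ≤ X.chainInner (X.pathChain γ) (X.pathChain π) := by
      rintro v π hπ ⟨π', hπ', h1⟩
      rw [hW v π π' hπ hπ']
      exact h1
    have hle : ∀ (v : X.V) (π : List X.E), X.IsPath x v π → ¬ A v →
        X.chainInner (X.pathChain γ) (X.pathChain π) ≤ 0 := by
      intro v π hπ hA
      by_contra hpos
      push_neg at hpos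
      obtain ⟨n, hn⟩ := hint π
      apply hA
      refine ⟨π, hπ, ?_⟩
      rw [hn] at hpos ⊢
      have h1 : (0:ℤ) < n := by exact_mod_cast hpos
      exact_mod_cast h1
    have hy : A y := by
      refine ⟨γ, hγ, ?_⟩
      have hpos := X.chainInner_self_pos (X.pathChain γ) hc
      obtain ⟨n, hn⟩ := hint γ
      rw [hn] at hpos ⊢
      have h1 : (0:ℤ) < n := by exact_mod_cast hpos
      exact_mod_cast h1
    have hx : ¬ A x := by
      rintro ⟨π, hπ, h1⟩
      have h0 := hW x π [] hπ (.nil x)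
      rw [SunadaGraph.pathChain_nil, SunadaGraph.chainInner_zero_right] at h0
      rw [h0] at h1
      linarith
    -- crossing bounds
    have hcrosspos : ∀ f : X.E, (∃ π, X.IsPath x (X.s f) π) → ¬ A (X.s f) → A (X.t f) →
        1 ≤ ((X.pathChain γ : ↥X.C1) : X.E →₀ ℝ) f := by
      rintro f ⟨π, hπ⟩ hs ht
      have h1 := hle _ π hπ hs
      have hπ2 : X.IsPath x (X.t f) (π ++ [f]) := X.isPath_append hπ (X.isPath_single f)
      have h2 := hge _ (π ++ [f]) hπ2 ht
      rw [SunadaGraph.pathChain_append, SunadaGraph.chainInner_add_right,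
        show X.pathChain [f] = X.edgeChain f from by simp,
        SunadaGraph.chainInner_edge_right] at h2
      linarith
    have hcrossneg : ∀ f : X.E, (∃ π, X.IsPath x (X.s f) π) → A (X.s f) → ¬ A (X.t f) →
        ((X.pathChain γ : ↥X.C1) : X.E →₀ ℝ) f ≤ -1 := by
      rintro f ⟨π, hπ⟩ hs ht
      have h1 := hge _ π hπ hs
      have hπ2 : X.IsPath x (X.t f) (π ++ [f]) := X.isPath_append hπ (X.isPath_single f)
      have h2 := hle _ (π ++ [f]) hπ2 ht
      rw [SunadaGraph.pathChain_append, SunadaGraph.chainInner_add_right,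
        show X.pathChain [f] = X.edgeChain f from by simp,
        SunadaGraph.chainInner_edge_right] at h2
      linarith
    have hreach_t : ∀ f : X.E, (∃ π, X.IsPath x (X.s f) π) → ∃ π, X.IsPath x (X.t f) π :=
      fun f ⟨π, hπ⟩ => ⟨π ++ [f], X.isPath_append hπ (X.isPath_single f)⟩
    have hreach_supp : ∀ f ∈ ((X.pathChain γ : ↥X.C1) : X.E →₀ ℝ).support,
        ∃ π, X.IsPath x (X.s f) π := by
      intro f hf
      rcases X.mem_of_pathChain_apply_ne_zero (Finsupp.mem_support_iff.mp hf) with hm | hm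
      · exact X.reach_source_of_mem hγ hm
      · obtain ⟨π, hπ⟩ := X.reach_source_of_mem hγ hm
        refine ⟨π ++ [X.inv f], ?_⟩
        have h2 := X.isPath_append hπ (X.isPath_single (X.inv f))
        rwa [X.t_inv] at h2
    -- the pairing sum
    have hsum := X.pairing_pathChain ι hγ
    rw [hι y, hι x, if_pos hy, if_neg hx, Finsupp.sum] at hsum
    -- hsum : ∑ f in supp, coe f * (ι (t f) - ι (s f)) = 2 * (1 - 0)
    -- term bounds
    have hterm_nonneg : ∀ f ∈ ((X.pathChain γ : ↥X.C1) : X.E →₀ ℝ).support,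
        0 ≤ ((X.pathChain γ : ↥X.C1) : X.E →₀ ℝ) f * (ι (X.t f) - ι (X.s f)) := by
      intro f hf
      have hr := hreach_supp f hf
      by_cases hs : A (X.s f) <;> by_cases ht : A (X.t f)
      · rw [hι, hι, if_pos hs, if_pos ht]; norm_num
      · have := hcrossneg f hr hs ht
        rw [hι, hι, if_neg ht, if_pos hs]
        nlinarith
      · have := hcrosspos f hr hs ht
        rw [hι, hι, if_pos ht, if_neg hs]
        nlinarith
      · rw [hι, hι, if_neg hs, if_neg ht]; norm_num
    have hterm_ge1 : ∀ f : X.E, (∃ π, X.IsPath x (X.s f) π) → ¬ (A (X.s f) ↔ A (X.t f)) →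
        1 ≤ ((X.pathChain γ : ↥X.C1) : X.E →₀ ℝ) f * (ι (X.t f) - ι (X.s f))
          ∧ f ∈ ((X.pathChain γ : ↥X.C1) : X.E →₀ ℝ).support := by
      intro f hr hcross
      by_cases hs : A (X.s f) <;> by_cases ht : A (X.t f)
      · exact absurd (iff_of_true hs ht) hcross
      · have h1 := hcrossneg f hr hs ht
        refine ⟨?_, Finsupp.mem_support_iff.mpr (by intro h0; rw [h0] at h1; linarith)⟩
        rw [hι, hι, if_neg ht, if_pos hs]
        nlinarith
      · have h1 := hcrosspos f hr hs ht
        refine ⟨?_, Finsupp.mem_support_iff.mpr (by intro h0; rw [h0] at h1; linarith)⟩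
        rw [hι, hι, if_pos ht, if_neg hs]
        nlinarith
      · exact absurd (iff_of_false hs ht) hcross
    -- existence of a crossing edge on γ
    have hexists : ∀ (u v : X.V) (δ : List X.E), X.IsPath u v δ → ¬ A u → A v →
        ∃ f ∈ δ, ¬ A (X.s f) ∧ A (X.t f) := by
      intro u v δ hδ
      induction hδ with
      | nil w => intro h1 h2; exact absurd h2 h1
      | cons f hp ih =>
          intro h1 h2
          by_cases hA : A (X.t f)
          · exact ⟨f, List.mem_cons_self, h1, hA⟩
          · obtain ⟨g, hg, hgs, hgt⟩ := ih hA h2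
            exact ⟨g, List.mem_cons_of_mem _ hg, hgs, hgt⟩
    obtain ⟨f₀, hf₀γ, hf₀s, hf₀t⟩ := hexists x y γ hγ hx hy
    have hreach₀ : ∃ π, X.IsPath x (X.s f₀) π := X.reach_source_of_mem hγ hf₀γ
    have hreach₀' : ∃ π, X.IsPath x (X.t f₀) π := hreach_t f₀ hreach₀
    have hc₀ : 1 ≤ ((X.pathChain γ : ↥X.C1) : X.E →₀ ℝ) f₀ := hcrosspos f₀ hreach₀ hf₀s hf₀t
    have hcross₀ : ¬ (A (X.s f₀) ↔ A (X.t f₀)) := by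
      intro hiff; exact hf₀s (hiff.mpr hf₀t)
    have hterm₀ := hterm_ge1 f₀ hreach₀ hcross₀
    have hcrossinv : ¬ (A (X.s (X.inv f₀)) ↔ A (X.t (X.inv f₀))) := by
      rw [X.s_inv, X.t_inv]
      intro hiff; exact hf₀s (hiff.mp hf₀t)
    have hreachinv : ∃ π, X.IsPath x (X.s (X.inv f₀)) π := by
      rw [X.s_inv]; exact hreach₀'
    have hterminv := hterm_ge1 (X.inv f₀) hreachinv hcrossinv
    -- uniqueness of the crossing edge
    have huniq : ∀ g : X.E, (∃ π, X.IsPath x (X.s g) π) → ¬ (A (X.s g) ↔ A (X.t g)) →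
        g = f₀ ∨ g = X.inv f₀ := by
      intro g hrg hcrossg
      by_contra hno
      push_neg at hno
      obtain ⟨hg1, hg2⟩ := hno
      have htermg := hterm_ge1 g hrg hcrossg
      have hne1 : f₀ ≠ X.inv f₀ := Ne.symm (X.inv_ne f₀)
      have hsub : ({f₀, X.inv f₀, g} : Finset X.E)
          ⊆ ((X.pathChain γ : ↥X.C1) : X.E →₀ ℝ).support := by
        intro a ha
        rcases Finset.mem_insert.mp ha with rfl | ha
        · exact hterm₀.2
        rcases Finset.mem_insert.mp ha with rfl | ha
        · exact hterminv.2
        rw [Finset.mem_singleton] at ha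
        exact ha ▸ htermg.2
      have h3 : (3:ℝ) ≤ ∑ f ∈ ({f₀, X.inv f₀, g} : Finset X.E),
          ((X.pathChain γ : ↥X.C1) : X.E →₀ ℝ) f * (ι (X.t f) - ι (X.s f)) := by
        rw [Finset.sum_insert (by simp [hne1, hg1.symm]),
          Finset.sum_insert (by simp [hg2.symm]), Finset.sum_singleton]
        linarith [hterm₀.1, hterminv.1, htermg.1]
      have hle2 := Finset.sum_le_sum_of_subset_of_nonneg hsub
        (fun i hi _ => hterm_nonneg i hi)
      rw [hsum] at hle2
      linarith
    -- walk along the non-bridge return path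
    have hnb₀ := hnb f₀
    unfold SunadaGraph.IsBridge at hnb₀
    rw [not_not] at hnb₀
    obtain ⟨δ, hδ, heδ, hinvδ⟩ := hnb₀
    have hinvar : ∀ (δ' : List X.E) (u v : X.V), X.IsPath u v δ' →
        (∃ π, X.IsPath x u π) → A u → (∀ g ∈ δ', g ≠ f₀ ∧ g ≠ X.inv f₀) → A v := by
      intro δ' u v hp
      induction hp with
      | nil w => intro _ hA _; exact hA
      | cons g hp ih =>
          intro hru hAu havoid
          have hg := havoid g (List.mem_cons_self)
          have hAt : A (X.t g) := by
            by_contra hAt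
            rcases huniq g hru (fun hiff => hAt (hiff.mp hAu)) with h | h
            · exact hg.1 h
            · exact hg.2 h
          exact ih (hreach_t g hru) hAt (fun g' hg' => havoid g' (List.mem_cons_of_mem _ hg'))
    exact hf₀s (hinvar δ _ _ hδ hreach₀' hf₀t
      (fun g hg => ⟨fun h => heδ (h ▸ hg), fun h => hinvδ (h ▸ hg)⟩))
  · -- orthogonal path chains vanish → no bridges
    intro hval e hbr
    have hz0 : ∀ z : ↥X.C1, X.IsCycle z → (z : X.E →₀ ℝ) e = 0 :=
      fun z hz => X.bridge_cycle_apply_zero e hbr z hz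
    have horth : ∀ z : ↥X.C1, X.IsCycle z → X.chainInner (X.pathChain [e]) z = 0 := by
      intro z hzc
      rw [show X.pathChain [e] = X.edgeChain e from by simp, SunadaGraph.chainInner_edge_left,
        hz0 z hzc]
    have h0 := hval _ _ [e] (X.isPath_single e) horth
    have h1 : ((X.pathChain [e] : ↥X.C1) : X.E →₀ ℝ) e = 1 := by
      rw [show X.pathChain [e] = X.edgeChain e from by simp, SunadaGraph.edgeChain_apply_self]
    rw [h0] at h1
    rw [X.coe_zeroC1] at h1
    simp at h1
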